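/- For every n ≥ 2, if x, x' ∈ ℝⁿ are rational points with den(x) = den(x'), then x and x' lie in the same 𝒢_n-orbit; consequently, for every rational x ∈ ℝⁿ, orb(x) = {x' ∈ ℝⁿ : G_{x'} = G_x}. -/

import Mathlib

/-- `y` is in the `GL(n,ℤ) ⋉ ℤⁿ`-orbit of `x`, i.e. `y = U x + t` for an integer
matrix `U` with `det U = ±1` and an integer vector `t`. -/
def SameOrbit (n : ℕ) (x y : Fin n → ℝ) : Prop :=
  ∃ (U : Matrix (Fin n) (Fin n) ℤ) (t : Fin n → ℤ),
    (U.det = 1 ∨ U.det = -1) ∧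
    ∀ i, y i = (∑ j, (U i j : ℝ) * x j) + (t i : ℝ)

/-- The subgroup `G_x = ℤ + ℤx₁ + ⋯ + ℤxₙ` of the additive reals. -/
def Gx {n : ℕ} (x : Fin n → ℝ) : AddSubgroup ℝ :=
  AddSubgroup.closure (insert (1 : ℝ) (Set.range x))

/-- A point of `ℝⁿ` is rational if all its coordinates are rational. -/
def IsRationalPoint {n : ℕ} (y : Fin n → ℝ) : Prop :=
  ∀ i, ∃ q : ℚ, y i = (q : ℝ)

/-- The denominator of a rational point: the least positive integer `d`
with `d • y ∈ ℤⁿ`. -/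
noncomputable def den {n : ℕ} (y : Fin n → ℝ) : ℕ :=
  sInf {d : ℕ | 0 < d ∧ ∀ i, ∃ m : ℤ, (d : ℝ) * y i = (m : ℝ)}

/-- The homogeneous correspondent `ỹ = den(y)·(y,1)`, viewed as a real vector. -/
noncomputable def tildeR {n : ℕ} (y : Fin n → ℝ) : Fin (n + 1) → ℝ :=
  fun i => (den y : ℝ) * (Fin.snoc y (1 : ℝ) : Fin (n + 1) → ℝ) i

/-- A rational `m`-simplex `conv(v₀,…,v_m) ⊆ ℝⁿ` is regular if the homogeneous
correspondents `ṽ₀,…,ṽ_m ∈ ℤ^{n+1}` can be extended to a ℤ-basis of `ℤ^{n+1}`. -/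
def IsRegularSimplex {n m : ℕ} (v : Fin (m + 1) → (Fin n → ℝ)) : Prop :=
  AffineIndependent ℝ v ∧ (∀ k, IsRationalPoint (v k)) ∧
  ∃ (b : Module.Basis (Fin (n + 1)) ℤ (Fin (n + 1) → ℤ)) (f : Fin (m + 1) ↪ Fin (n + 1)),
    ∀ k i, ((b (f k)) i : ℝ) = tildeR (v k) i

/-- A rational hyperplane in `ℝⁿ`. -/
def IsRatHyperplane {n : ℕ} (H : Set (Fin n → ℝ)) : Prop :=
  ∃ (h : Fin n → ℚ) (k : ℚ), h ≠ 0 ∧ H = {z | (∑ i, (h i : ℝ) * z i) = (k : ℝ)}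

/-- A rational affine space: an intersection of rational hyperplanes. -/
def IsRatAffineSpace {n : ℕ} (F : Set (Fin n → ℝ)) : Prop :=
  ∃ S : Set (Set (Fin n → ℝ)), (∀ H ∈ S, IsRatHyperplane H) ∧ F = ⋂₀ S

/-- `F_x`: the intersection of all rational hyperplanes containing `x`
(`= ℝⁿ` if there is no such hyperplane). -/
def Fx {n : ℕ} (x : Fin n → ℝ) : Set (Fin n → ℝ) :=
  ⋂₀ {H | IsRatHyperplane H ∧ x ∈ H}

/-- The (affine) dimension of a subset of `ℝⁿ`. -/
noncomputable def affDim {n : ℕ} (F : Set (Fin n → ℝ)) : ℕ :=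
  Module.finrank ℝ ↥(vectorSpan ℝ F)

/-- `d_F`: the least denominator of a rational point of `F`. -/
noncomputable def dF {n : ℕ} (F : Set (Fin n → ℝ)) : ℕ :=
  sInf {d : ℕ | ∃ y ∈ F, IsRationalPoint y ∧ den y = d}

/-- `c_F`: the smallest possible denominator of a vertex of a regular `n`-simplex
`conv(v₀,…,v_n) ⊆ ℝⁿ` with `v₀,…,v_e ∈ F`. -/
noncomputable def cF {n : ℕ} (e : ℕ) (F : Set (Fin n → ℝ)) : ℕ :=
  sInf {c : ℕ | ∃ (v : Fin (n + 1) → (Fin n → ℝ)) (i : Fin (n + 1)),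
    IsRegularSimplex v ∧ (∀ k : Fin (n + 1), (k : ℕ) ≤ e → v k ∈ F) ∧ den (v i) = c}

/-- `c_x = c_{F_x}`. -/
noncomputable def cx {n : ℕ} (x : Fin n → ℝ) : ℕ := cF (affDim (Fx x)) (Fx x)

/-- Membership in the Farey sequence `𝔉_d`. -/
def InFarey (d : ℕ) (x : ℚ) : Prop := 0 ≤ x ∧ x ≤ 1 ∧ x.den ≤ d

/-- `x` and `y` are neighbors (contiguous elements) of the Farey sequence `𝔉_d`. -/
def FareyNeighbor (d : ℕ) (x y : ℚ) : Prop :=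
  InFarey d x ∧ InFarey d y ∧ x ≠ y ∧
  ∀ t : ℚ, InFarey d t → ¬ (min x y < t ∧ t < max x y)

/-- `y` is the companion of `x`: `comp 0 = 1`, `comp 1 = 0`, `comp (1/2) = 1`, and
for denominator `d ≥ 3`, `comp x` is the neighbor of `x` in `𝔉_d` with smaller
denominator than the other neighbor. -/
def IsCompanion (x y : ℚ) : Prop :=
  (x = 0 ∧ y = 1) ∨ (x = 1 ∧ y = 0) ∨ (x = 1/2 ∧ y = 1) ∨
  (3 ≤ x.den ∧ FareyNeighbor x.den x y ∧
    ∀ z : ℚ, FareyNeighbor x.den x z → z ≠ y → y.den < z.den)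


section Aux
open Matrix
set_option linter.unusedSectionVars false
variable {n : ℕ}

lemma transvection_mulVec (i j : Fin n) (c : ℤ) (a : Fin n → ℤ) :
    (Matrix.transvection i j c).mulVec a = fun k => if k = i then a i + c * a j else a k := by
  funext k
  simp only [Matrix.transvection, Matrix.add_mulVec, Matrix.one_mulVec, Pi.add_apply]
  have h : (Matrix.single i j c).mulVec a k = if k = i then c * a j else 0 := by
    simp [Matrix.mulVec, dotProduct, Matrix.single, ite_and, eq_comm,
      Finset.sum_ite_eq]
  rw [h]
  by_cases h : k = i <;> simp [h]

lemma rot_mulVec (i j : Fin n) (hij : i ≠ j) (a : Fin n → ℤ) :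
    ∃ R : Matrix (Fin n) (Fin n) ℤ, R.det = 1 ∧
      R.mulVec a = fun k => if k = i then a j else if k = j then -(a i) else a k := by
  refine ⟨Matrix.transvection i j 1 * (Matrix.transvection j i (-1) * Matrix.transvection i j 1),
    ?_, ?_⟩
  · rw [Matrix.det_mul, Matrix.det_mul]
    rw [Matrix.det_transvection_of_ne i j hij, Matrix.det_transvection_of_ne j i hij.symm]
    norm_num
  · rw [← Matrix.mulVec_mulVec, ← Matrix.mulVec_mulVec, transvection_mulVec,
      transvection_mulVec, transvection_mulVec]
    funext k
    by_cases hk : k = i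
    · subst hk
      simp [hij, hij.symm, Ne.symm hij]
      try ring
    · by_cases hk2 : k = j
      · subst hk2
        simp [hij, hij.symm, Ne.symm hij, hk]
        try ring
      · simp [hk, hk2]

lemma int_gcd_add_mul (a b c : ℤ) : Int.gcd (a + c * b) b = Int.gcd a b := by
  apply Nat.dvd_antisymm
  · rw [← Int.natCast_dvd_natCast]
    apply Int.dvd_coe_gcd
    · have h1 : (↑(Int.gcd (a + c * b) b) : ℤ) ∣ (a + c * b) := Int.gcd_dvd_left _ _
      have h2 : (↑(Int.gcd (a + c * b) b) : ℤ) ∣ b := Int.gcd_dvd_right _ _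
      have := dvd_sub h1 (h2.mul_left c)
      simpa using this
    · exact Int.gcd_dvd_right _ _
  · rw [← Int.natCast_dvd_natCast]
    apply Int.dvd_coe_gcd
    · exact dvd_add (Int.gcd_dvd_left _ _) ((Int.gcd_dvd_right _ _).mul_left c)
    · exact Int.gcd_dvd_right _ _

lemma euclid_pair (i j : Fin n) (hij : i ≠ j) :
    ∀ (m : ℕ) (a : Fin n → ℤ), (a j).natAbs ≤ m →
    ∃ U : Matrix (Fin n) (Fin n) ℤ, U.det = 1 ∧
      (U.mulVec a) j = 0 ∧ ((U.mulVec a) i).natAbs = Int.gcd (a i) (a j) ∧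
      ∀ k, k ≠ i → k ≠ j → U.mulVec a k = a k := by
  intro m
  induction m with
  | zero =>
    intro a ha
    have hz : a j = 0 := by omega
    exact ⟨1, Matrix.det_one, by simp [hz], by simp [hz, Int.gcd_zero_right], by simp⟩
  | succ m ih =>
    intro a ha
    by_cases hz : a j = 0
    · exact ⟨1, Matrix.det_one, by simp [hz], by simp [hz, Int.gcd_zero_right], by simp⟩
    · set q : ℤ := a i / a j with hq
      set T := Matrix.transvection i j (-q) with hT
      set b := T.mulVec a with hbdef
      have hb : b = fun k => if k = i then a i + (-q) * a j else a k := by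
        rw [hbdef, hT, transvection_mulVec]
      have hbi : b i = a i % a j := by rw [hb]; simp; rw [Int.emod_def]; ring
      have hbj : b j = a j := by rw [hb]; simp [Ne.symm hij]
      have hbk : ∀ k, k ≠ i → b k = a k := by intro k hk; rw [hb]; simp [hk]
      obtain ⟨R, hRdet, hR⟩ := rot_mulVec i j hij b
      have hci : (R.mulVec b) i = a j := by rw [hR]; simp [hbj]
      have hcj : (R.mulVec b) j = -(a i % a j) := by rw [hR]; simp [Ne.symm hij, hbi]
      have hck : ∀ k, k ≠ i → k ≠ j → (R.mulVec b) k = a k := by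
        intro k hk hk2; rw [hR]; simp [hk, hk2, hbk k hk]
      have hlt : ((R.mulVec b) j).natAbs ≤ m := by
        rw [hcj, Int.natAbs_neg]
        have h1 := Int.emod_nonneg (a i) hz
        have h2 := Int.emod_lt (a i) hz
        have h3 : (a j).natAbs ≤ m + 1 := ha
        omega
      obtain ⟨W, hWdet, hWj, hWi, hWk⟩ := ih (R.mulVec b) hlt
      refine ⟨W * (R * T), ?_, ?_, ?_, ?_⟩
      · rw [Matrix.det_mul, Matrix.det_mul, hWdet, hRdet, hT,
          Matrix.det_transvection_of_ne i j hij]; ring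
      · rw [← Matrix.mulVec_mulVec, ← Matrix.mulVec_mulVec]
        exact hWj
      · rw [← Matrix.mulVec_mulVec, ← Matrix.mulVec_mulVec]
        rw [hWi, hci, hcj, Int.gcd, Int.natAbs_neg, ← Int.gcd]
        rw [Int.gcd_comm]
        have : a i % a j = a i + (-q) * a j := by rw [Int.emod_def]; ring
        rw [this, int_gcd_add_mul]
      · intro k hk hk2
        rw [← Matrix.mulVec_mulVec, ← Matrix.mulVec_mulVec]
        rw [hWk k hk hk2, hck k hk hk2]

lemma int_gcd_neg_right (a b : ℤ) : Int.gcd a (-b) = Int.gcd a b := by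
  simp [Int.gcd, Int.natAbs_neg]

def AffReach (n : ℕ) (d : ℤ) (a b : Fin n → ℤ) : Prop :=
  ∃ (U : Matrix (Fin n) (Fin n) ℤ) (t : Fin n → ℤ),
    (U.det = 1 ∨ U.det = -1) ∧ U.mulVec a + d • t = b

lemma exists_int_inv (U : Matrix (Fin n) (Fin n) ℤ) (h : U.det = 1 ∨ U.det = -1) :
    ∃ V : Matrix (Fin n) (Fin n) ℤ, (V.det = 1 ∨ V.det = -1) ∧ V * U = 1 ∧ U * V = 1 := by
  have h2 : U.det * U.det = 1 := by rcases h with h | h <;> rw [h] <;> ring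
  have hVU : (U.det • U.adjugate) * U = 1 := by
    rw [Matrix.smul_mul, Matrix.adjugate_mul, smul_smul, h2, one_smul]
  refine ⟨U.det • U.adjugate, ?_, hVU, ?_⟩
  · have hd : (U.det • U.adjugate).det * U.det = 1 := by
      rw [← Matrix.det_mul, hVU, Matrix.det_one]
    have := IsUnit.of_mul_eq_one _ hd
    rwa [Int.isUnit_iff] at this
  · rw [Matrix.mul_smul, Matrix.mul_adjugate, smul_smul, h2, one_smul]

lemma AffReach.trans {d : ℤ} {a b c : Fin n → ℤ} (h1 : AffReach n d a b)
    (h2 : AffReach n d b c) : AffReach n d a c := by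
  obtain ⟨U1, t1, hU1, he1⟩ := h1
  obtain ⟨U2, t2, hU2, he2⟩ := h2
  refine ⟨U2 * U1, U2.mulVec t1 + t2, ?_, ?_⟩
  · rw [Matrix.det_mul]
    rcases hU1 with h | h <;> rcases hU2 with h' | h' <;> simp [h, h']
  · rw [← he2, ← he1, Matrix.mulVec_add, Matrix.mulVec_smul, ← Matrix.mulVec_mulVec,
      smul_add]
    abel

lemma AffReach.symm {d : ℤ} {a b : Fin n → ℤ} (h : AffReach n d a b) : AffReach n d b a := by
  obtain ⟨U, t, hU, he⟩ := h
  obtain ⟨V, hV, hVU, _⟩ := exists_int_inv U hU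
  refine ⟨V, -(V.mulVec t), hV, ?_⟩
  have h3 : V.mulVec b = a + d • V.mulVec t := by
    rw [← he, Matrix.mulVec_add, Matrix.mulVec_smul, Matrix.mulVec_mulVec, hVU,
      Matrix.one_mulVec]
  rw [h3, smul_neg]
  abel

lemma AffReach.of_mulVec {d : ℤ} {a : Fin n → ℤ} (U : Matrix (Fin n) (Fin n) ℤ)
    (hU : U.det = 1 ∨ U.det = -1) : AffReach n d a (U.mulVec a) := ⟨U, 0, hU, by simp⟩

lemma AffReach.translate {d : ℤ} (a t : Fin n → ℤ) : AffReach n d a (a + d • t) :=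
  ⟨1, t, Or.inl Matrix.det_one, by simp⟩

lemma gcd_juggle (G B d : ℕ) : Nat.gcd (Nat.gcd (Nat.gcd G d) B) d = Nat.gcd (Nat.gcd B G) d := by
  rw [Nat.gcd_assoc, Nat.gcd_assoc, Nat.gcd_comm B d, ← Nat.gcd_assoc d d B, Nat.gcd_self,
    Nat.gcd_comm B G, ← Nat.gcd_assoc, Nat.gcd_assoc, Nat.gcd_comm d B, ← Nat.gcd_assoc]

lemma pair_reduce [NeZero n] (d : ℕ) (i : Fin n) (hi : i ≠ 0) (c : Fin n → ℤ) :
    ∃ e, AffReach n (d : ℤ) c e ∧ e i = 0 ∧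
      (e 0).natAbs = Nat.gcd (Int.gcd (c 0) (c i)) d ∧
      ∀ k, k ≠ 0 → k ≠ i → e k = c k := by
  have h0i : (0 : Fin n) ≠ i := Ne.symm hi
  obtain ⟨U1, hU1det, hb_i, hb_0, hb_k⟩ := euclid_pair 0 i h0i (c i).natAbs c le_rfl
  set b := U1.mulVec c with hbdef
  set b' := b + (d : ℤ) • (fun k => if k = i then (1 : ℤ) else 0) with hb'def
  have hb'i : b' i = (d : ℤ) := by simp [hb'def, hb_i]
  have hb'0 : b' 0 = b 0 := by simp [hb'def, h0i]
  have hb'k : ∀ k, k ≠ 0 → k ≠ i → b' k = b k := by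
    intro k hk hk2; simp [hb'def, hk2]
  obtain ⟨U2, hU2det, he_i, he_0, he_k⟩ := euclid_pair 0 i h0i (b' i).natAbs b' le_rfl
  refine ⟨U2.mulVec b', ?_, he_i, ?_, ?_⟩
  · exact ((AffReach.of_mulVec U1 (Or.inl hU1det)).trans
      (AffReach.translate b _)).trans (AffReach.of_mulVec U2 (Or.inl hU2det))
  · rw [he_0, hb'0, hb'i]
    rw [show Int.gcd (b 0) (d : ℤ) = Nat.gcd (b 0).natAbs d by simp [Int.gcd], hb_0]
  · intro k hk hk2
    rw [he_k k hk hk2, hb'k k hk hk2, hb_k k hk hk2]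

lemma reduce_aux [NeZero n] (d : ℕ) (a : Fin n → ℤ) :
    ∀ (m : ℕ) (s : Finset (Fin n)), s.card = m → (0 : Fin n) ∉ s → s.Nonempty →
    ∃ b, AffReach n (d : ℤ) a b ∧ (∀ i ∈ s, b i = 0) ∧
      (b 0).natAbs = Nat.gcd ((insert 0 s).gcd fun i => (a i).natAbs) d ∧
      ∀ j, j ∉ s → j ≠ 0 → b j = a j := by
  intro m
  induction m with
  | zero =>
    intro s hcard h0 hne
    rw [Finset.card_eq_zero] at hcard
    subst hcard
    exact absurd hne (by simp)
  | succ m ih =>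
    intro s hcard h0 hne
    obtain ⟨i, t, hit, rfl, htcard⟩ := Finset.card_eq_succ.1 hcard
    have hi0 : i ≠ 0 := by rintro rfl; exact h0 (Finset.mem_insert_self _ _)
    have h0t : (0 : Fin n) ∉ t := fun h => h0 (Finset.mem_insert_of_mem h)
    rcases t.eq_empty_or_nonempty with rfl | htne
    · obtain ⟨e, hre, hei, he0, hek⟩ := pair_reduce d i hi0 a
      refine ⟨e, hre, ?_, ?_, ?_⟩
      · intro k hk
        rw [Finset.mem_insert] at hk
        rcases hk with rfl | hk
        · exact hei
        · simp at hk
      · rw [he0]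
        congr 1
        rw [Finset.gcd_insert, Finset.gcd_insert, Finset.gcd_empty]
        show Int.gcd (a 0) (a i) = Nat.gcd (a 0).natAbs (Nat.gcd (a i).natAbs 0)
        rw [Nat.gcd_zero_right]
        rfl
      · intro j hj hj0
        exact hek j hj0 (by simpa using hj)
    · obtain ⟨b, hrb, hbzero, hb0, hbk⟩ := ih t htcard h0t htne
      obtain ⟨e, hre, hei, he0, hek⟩ := pair_reduce d i hi0 b
      refine ⟨e, hrb.trans hre, ?_, ?_, ?_⟩
      · intro k hk
        rw [Finset.mem_insert] at hk
        rcases hk with rfl | hk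
        · exact hei
        · have hk0 : k ≠ 0 := fun h => h0t (h ▸ hk)
          have hki : k ≠ i := fun h => hit (h ▸ hk)
          rw [hek k hk0 hki]
          exact hbzero k hk
      · rw [he0]
        have hbi : b i = a i := hbk i hit hi0
        have : Int.gcd (b 0) (b i) = Nat.gcd (Nat.gcd ((insert 0 t).gcd fun k => (a k).natAbs) d)
            (a i).natAbs := by
          rw [Int.gcd, hb0, hbi]
        rw [this, gcd_juggle]
        congr 1
        conv_rhs => rw [show insert (0 : Fin n) (insert i t) = insert i (insert 0 t) from
          Finset.insert_comm 0 i t, Finset.gcd_insert]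
        rfl
      · intro j hj hj0
        have hji : j ≠ i := fun h => hj (h ▸ Finset.mem_insert_self i t)
        have hjt : j ∉ t := fun h => hj (Finset.mem_insert_of_mem h)
        rw [hek j hj0 hji, hbk j hjt hj0]

def e0 (n : ℕ) [NeZero n] : Fin n → ℤ := fun i => if i = 0 then 1 else 0

lemma sign_fix [NeZero n] (b : Fin n → ℤ) (h0 : (b 0).natAbs = 1)
    (hrest : ∀ i, i ≠ 0 → b i = 0) :
    ∃ U : Matrix (Fin n) (Fin n) ℤ, (U.det = 1 ∨ U.det = -1) ∧ U.mulVec b = e0 n := by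
  refine ⟨Matrix.diagonal (fun k => if k = 0 then b 0 else 1), ?_, ?_⟩
  · rw [Matrix.det_diagonal]
    have : (∏ i : Fin n, if i = 0 then b 0 else 1) = b 0 := by simp [Finset.prod_ite_eq]
    rw [this]
    rcases Int.natAbs_eq_iff.1 h0 with h | h
    · exact Or.inl (by simpa using h)
    · exact Or.inr (by simpa using h)
  · funext k
    rw [Matrix.mulVec_diagonal]
    by_cases hk : k = 0
    · subst hk
      have : b 0 * b 0 = 1 := by
        rcases Int.natAbs_eq_iff.1 h0 with h | h <;> simp [h]
      simpa [e0] using this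
    · simp [hk, e0, hrest k hk]

lemma reduce_to_e0 [NeZero n] (hn : 2 ≤ n) (d : ℕ) (a : Fin n → ℤ)
    (hg : Nat.gcd (Finset.univ.gcd fun i => (a i).natAbs) d = 1) :
    AffReach n (d : ℤ) a (e0 n) := by
  set s : Finset (Fin n) := Finset.univ.erase 0 with hs
  have h0s : (0 : Fin n) ∉ s := Finset.notMem_erase _ _
  have hsne : s.Nonempty := by
    refine ⟨⟨1, by omega⟩, ?_⟩
    rw [hs, Finset.mem_erase]
    refine ⟨?_, Finset.mem_univ _⟩
    intro h
    have h2 := congrArg Fin.val h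
    simp at h2
  obtain ⟨b, hrb, hbzero, hb0, _⟩ := reduce_aux d a s.card s rfl h0s hsne
  have hins : insert (0 : Fin n) s = Finset.univ := by
    rw [hs, Finset.insert_erase (Finset.mem_univ 0)]
  rw [hins, hg] at hb0
  obtain ⟨U, hUdet, hUe⟩ := sign_fix b hb0 (fun i hi => hbzero i (by
    rw [hs, Finset.mem_erase]; exact ⟨hi, Finset.mem_univ i⟩))
  exact hrb.trans (hUe ▸ AffReach.of_mulVec U hUdet)






lemma den_mem {x : Fin n → ℝ} (hx : IsRationalPoint x) :
    0 < den x ∧ ∀ i, ∃ m : ℤ, (den x : ℝ) * x i = (m : ℝ) := by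
  have hne : {d : ℕ | 0 < d ∧ ∀ i, ∃ m : ℤ, (d : ℝ) * x i = (m : ℝ)}.Nonempty := by
    classical
    set q : Fin n → ℚ := fun i => Classical.choose (hx i) with hq
    have hqe : ∀ i, x i = (q i : ℝ) := fun i => Classical.choose_spec (hx i)
    refine ⟨∏ i, (q i).den, Finset.prod_pos fun i _ => (q i).pos, fun i => ?_⟩
    obtain ⟨k, hk⟩ := Finset.dvd_prod_of_mem (fun i => (q i).den) (Finset.mem_univ i)
    refine ⟨(q i).num * k, ?_⟩
    have hQ : ((∏ i, (q i).den : ℕ) : ℚ) * q i = (((q i).num * k : ℤ) : ℚ) := by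
      rw [hk]
      push_cast
      rw [show ((q i).den : ℚ) * (k : ℚ) * q i = (k : ℚ) * (q i * (q i).den) by ring,
        Rat.mul_den_eq_num]
      ring
    rw [hqe i]
    exact_mod_cast congrArg (fun r : ℚ => (r : ℝ)) hQ
  exact Nat.sInf_mem hne

lemma den_le {x : Fin n → ℝ} (d : ℕ) (hd : 0 < d) (h : ∀ i, ∃ m : ℤ, (d : ℝ) * x i = (m : ℝ)) :
    den x ≤ d := Nat.sInf_le ⟨hd, h⟩

lemma den_gcd_one {x : Fin n → ℝ} (hx : IsRationalPoint x) (a : Fin n → ℤ)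
    (ha : ∀ i, (den x : ℝ) * x i = (a i : ℝ)) :
    Nat.gcd (Finset.univ.gcd fun i => (a i).natAbs) (den x) = 1 := by
  obtain ⟨hdpos, -⟩ := den_mem hx
  set d := den x with hd
  set g := Nat.gcd (Finset.univ.gcd fun i => (a i).natAbs) d with hg
  have hgd : g ∣ d := Nat.gcd_dvd_right _ _
  have hgpos : 0 < g := Nat.pos_of_ne_zero fun h => by
    rw [hg] at h
    have := Nat.eq_zero_of_gcd_eq_zero_right h
    omega
  by_contra hne
  have hg2 : 2 ≤ g := by omega
  obtain ⟨d', hd'⟩ := hgd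
  have hd'pos : 0 < d' := by
    rcases Nat.eq_zero_or_pos d' with h | h
    · rw [h, mul_zero] at hd'; omega
    · exact h
  have hmem : ∀ i, ∃ m : ℤ, (d' : ℝ) * x i = (m : ℝ) := by
    intro i
    have hgai : (g : ℤ) ∣ a i := by
      have h1 : (Finset.univ.gcd fun i => (a i).natAbs) ∣ (a i).natAbs :=
        Finset.gcd_dvd (Finset.mem_univ i)
      have h2 : g ∣ (a i).natAbs := (Nat.gcd_dvd_left _ _).trans h1
      exact Int.natCast_dvd_natCast.2 h2 |>.trans (Int.natAbs_dvd.2 dvd_rfl)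
    obtain ⟨m, hm⟩ := hgai
    refine ⟨m, ?_⟩
    have hcast : ((g : ℝ)) * ((d' : ℝ) * x i) = (g : ℝ) * (m : ℝ) := by
      have h1 : (d : ℝ) * x i = (a i : ℝ) := ha i
      rw [hd'] at h1
      push_cast at h1 ⊢
      rw [← mul_assoc, h1, hm]
      push_cast
      ring
    have hgne : (g : ℝ) ≠ 0 := by positivity
    exact mul_left_cancel₀ hgne hcast
  have := den_le d' hd'pos hmem
  rw [← hd] at this
  have : d ≤ d' := this
  nlinarith [hd', hd'pos, hg2]

lemma sameOrbit_iff {x y : Fin n → ℝ} :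
    SameOrbit n x y ↔ ∃ (U : Matrix (Fin n) (Fin n) ℤ) (t : Fin n → ℤ),
      (U.det = 1 ∨ U.det = -1) ∧
      y = (U.map (Int.cast : ℤ → ℝ)).mulVec x + fun i => (t i : ℝ) := by
  have key : ∀ (U : Matrix (Fin n) (Fin n) ℤ) (x : Fin n → ℝ) (i : Fin n),
      (U.map (Int.cast : ℤ → ℝ)).mulVec x i = ∑ j, (U i j : ℝ) * x j := by
    intro U x i
    simp [Matrix.mulVec, dotProduct, Matrix.map_apply]
  constructor
  · rintro ⟨U, t, hU, hy⟩
    refine ⟨U, t, hU, funext fun i => ?_⟩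
    rw [hy i, Pi.add_apply, key]
  · rintro ⟨U, t, hU, hy⟩
    refine ⟨U, t, hU, fun i => ?_⟩
    rw [hy, Pi.add_apply, key]

lemma castVec_mulVec (U : Matrix (Fin n) (Fin n) ℤ) (t : Fin n → ℤ) (i : Fin n) :
    ((U.mulVec t i : ℤ) : ℝ) = (U.map (Int.cast : ℤ → ℝ)).mulVec (fun j => (t j : ℝ)) i := by
  simp [Matrix.mulVec, dotProduct, Matrix.map_apply]

lemma sameOrbit_refl (x : Fin n → ℝ) : SameOrbit n x x := by
  rw [sameOrbit_iff]
  refine ⟨1, 0, Or.inl Matrix.det_one, ?_⟩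
  funext i
  simp [Matrix.map_one]

lemma exists_int_inv' (U : Matrix (Fin n) (Fin n) ℤ) (h : U.det = 1 ∨ U.det = -1) :
    ∃ V : Matrix (Fin n) (Fin n) ℤ, (V.det = 1 ∨ V.det = -1) ∧ V * U = 1 ∧ U * V = 1 := by
  have h2 : U.det * U.det = 1 := by rcases h with h | h <;> rw [h] <;> ring
  have hVU : (U.det • U.adjugate) * U = 1 := by
    rw [Matrix.smul_mul, Matrix.adjugate_mul, smul_smul, h2, one_smul]
  refine ⟨U.det • U.adjugate, ?_, hVU, ?_⟩
  · have hd : (U.det • U.adjugate).det * U.det = 1 := by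
      rw [← Matrix.det_mul, hVU, Matrix.det_one]
    have := IsUnit.of_mul_eq_one _ hd
    rwa [Int.isUnit_iff] at this
  · rw [Matrix.mul_smul, Matrix.mul_adjugate, smul_smul, h2, one_smul]

lemma map_mul_int (U V : Matrix (Fin n) (Fin n) ℤ) :
    (U * V).map (Int.cast : ℤ → ℝ) = U.map (Int.cast : ℤ → ℝ) * V.map (Int.cast : ℤ → ℝ) :=
  Matrix.map_mul (f := Int.castRingHom ℝ)

lemma sameOrbit_symm {x y : Fin n → ℝ} (h : SameOrbit n x y) : SameOrbit n y x := by
  rw [sameOrbit_iff] at h ⊢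
  obtain ⟨U, t, hU, hy⟩ := h
  obtain ⟨V, hV, hVU, -⟩ := exists_int_inv' U hU
  refine ⟨V, -(V.mulVec t), hV, funext fun i => ?_⟩
  have h1 : (V.map (Int.cast : ℤ → ℝ)).mulVec y =
      x + (V.map (Int.cast : ℤ → ℝ)).mulVec (fun j => (t j : ℝ)) := by
    rw [hy, Matrix.mulVec_add, Matrix.mulVec_mulVec, ← map_mul_int, hVU]
    simp [Matrix.map_one]
  rw [Pi.add_apply, h1]
  have h2 : ((-(V.mulVec t)) i : ℝ) = -((V.mulVec t i : ℤ) : ℝ) := by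
    rw [Pi.neg_apply, Int.cast_neg]
  rw [h2, castVec_mulVec]
  simp

lemma sameOrbit_trans {x y z : Fin n → ℝ} (h1 : SameOrbit n x y) (h2 : SameOrbit n y z) :
    SameOrbit n x z := by
  rw [sameOrbit_iff] at h1 h2 ⊢
  obtain ⟨U, t, hU, hy⟩ := h1
  obtain ⟨W, s, hW, hz⟩ := h2
  refine ⟨W * U, W.mulVec t + s, ?_, funext fun i => ?_⟩
  · rw [Matrix.det_mul]
    rcases hU with h | h <;> rcases hW with h' | h' <;> simp [h, h']
  · rw [hz, hy, Pi.add_apply, Pi.add_apply, Matrix.mulVec_add, map_mul_int,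
      ← Matrix.mulVec_mulVec]
    have h3 : ((W.mulVec t + s) i : ℝ) =
        (W.map (Int.cast : ℤ → ℝ)).mulVec (fun j => (t j : ℝ)) i + (s i : ℝ) := by
      rw [Pi.add_apply, Int.cast_add, castVec_mulVec]
    rw [h3, Pi.add_apply]
    ring

lemma affReach_sameOrbit {d : ℕ} (hd : 0 < d) {x x' : Fin n → ℝ} {a b : Fin n → ℤ}
    (hxa : ∀ i, (d : ℝ) * x i = (a i : ℝ)) (hxb : ∀ i, (d : ℝ) * x' i = (b i : ℝ))
    (h : AffReach n (d : ℤ) a b) : SameOrbit n x x' := by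
  obtain ⟨U, t, hU, he⟩ := h
  refine ⟨U, t, hU, fun i => ?_⟩
  have hdne : (d : ℝ) ≠ 0 := by positivity
  apply mul_left_cancel₀ hdne
  rw [hxb i]
  have hbi : b i = (U.mulVec a) i + (d : ℤ) * t i := by
    rw [← he]; simp [Pi.add_apply]
  rw [hbi]
  have hsum : ((U.mulVec a i : ℤ) : ℝ) = ∑ j, (U i j : ℝ) * (a j : ℝ) := by
    simp [Matrix.mulVec, dotProduct]
  push_cast
  rw [hsum]
  have : ∀ j, (a j : ℝ) = (d : ℝ) * x j := fun j => (hxa j).symm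
  rw [mul_add, Finset.mul_sum]
  congr 1
  apply Finset.sum_congr rfl
  intro j _
  rw [this j]; ring

lemma den_eq_sameOrbit (hn : 2 ≤ n) (x x' : Fin n → ℝ) (hx : IsRationalPoint x)
    (hx' : IsRationalPoint x') (hden : den x = den x') : SameOrbit n x x' := by
  haveI : NeZero n := ⟨by omega⟩
  obtain ⟨hd, hax⟩ := den_mem hx
  obtain ⟨hd', hax'⟩ := den_mem hx'
  choose a ha using hax
  choose b hb using hax'
  rw [← hden] at hb hd'
  have h1 : AffReach n ((den x : ℕ) : ℤ) a (e0 n) :=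
    reduce_to_e0 hn (den x) a (den_gcd_one hx a ha)
  have h2 : AffReach n ((den x : ℕ) : ℤ) b (e0 n) := by
    have := den_gcd_one hx' b (by rw [← hden]; exact hb)
    rw [← hden] at this
    exact reduce_to_e0 hn (den x) b this
  exact affReach_sameOrbit hd ha hb (h1.trans h2.symm)

lemma exists_bezout [NeZero n] (hn : 2 ≤ n) (d : ℕ) (a : Fin n → ℤ)
    (hg : Nat.gcd (Finset.univ.gcd fun i => (a i).natAbs) d = 1) :
    ∃ (c : Fin n → ℤ) (m : ℤ), (∑ j, c j * a j) + (d : ℤ) * m = 1 := by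
  obtain ⟨U, t, -, he⟩ := reduce_to_e0 hn d a hg
  refine ⟨U 0, t 0, ?_⟩
  have h0 := congrFun he 0
  simp only [Pi.add_apply, Pi.smul_apply, smul_eq_mul] at h0
  rw [show e0 n 0 = 1 from by simp [e0]] at h0
  rw [← h0]
  congr 1

lemma Gx_le_of_sameOrbit {x y : Fin n → ℝ} (h : SameOrbit n x y) : Gx y ≤ Gx x := by
  obtain ⟨U, t, hU, hy⟩ := h
  rw [Gx, AddSubgroup.closure_le]
  rintro z hz
  simp only [Set.mem_insert_iff, Set.mem_range] at hz
  rcases hz with rfl | ⟨i, rfl⟩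
  · exact AddSubgroup.subset_closure (Set.mem_insert _ _)
  · rw [hy i]
    apply AddSubgroup.add_mem
    · apply AddSubgroup.sum_mem
      intro j _
      rw [show (U i j : ℝ) * x j = (U i j : ℤ) • x j from (zsmul_eq_mul _ _).symm]
      exact AddSubgroup.zsmul_mem _ (AddSubgroup.subset_closure
        (Set.mem_insert_of_mem _ (Set.mem_range_self j))) _
    · rw [show ((t i : ℤ) : ℝ) = (t i : ℤ) • (1 : ℝ) by simp]
      exact AddSubgroup.zsmul_mem _ (AddSubgroup.subset_closure (Set.mem_insert _ _)) _

lemma Gx_eq_of_sameOrbit {x y : Fin n → ℝ} (h : SameOrbit n x y) : Gx y = Gx x :=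
  le_antisymm (Gx_le_of_sameOrbit h) (Gx_le_of_sameOrbit (sameOrbit_symm h))

lemma Gx_eq_zmultiples (hn : 2 ≤ n) {x : Fin n → ℝ} (hx : IsRationalPoint x) :
    Gx x = AddSubgroup.zmultiples ((den x : ℝ)⁻¹) := by
  haveI : NeZero n := ⟨by omega⟩
  obtain ⟨hd, hax⟩ := den_mem hx
  choose a ha using hax
  have hdne : ((den x : ℕ) : ℝ) ≠ 0 := by positivity
  apply le_antisymm
  · rw [Gx, AddSubgroup.closure_le]
    rintro z hz
    simp only [Set.mem_insert_iff, Set.mem_range] at hz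
    rcases hz with rfl | ⟨i, rfl⟩
    · rw [SetLike.mem_coe, AddSubgroup.mem_zmultiples_iff]
      exact ⟨(den x : ℤ), by rw [zsmul_eq_mul]; push_cast; field_simp⟩
    · rw [SetLike.mem_coe, AddSubgroup.mem_zmultiples_iff]
      refine ⟨a i, ?_⟩
      rw [zsmul_eq_mul]
      field_simp
      rw [mul_comm]
      linarith [ha i]
  · rw [AddSubgroup.zmultiples_le]
    obtain ⟨c, m, hcm⟩ := exists_bezout hn (den x) a (den_gcd_one hx a ha)
    have hmul : ∀ j ∈ Finset.univ, (den x : ℝ) * ((c j : ℝ) * x j) = (c j : ℝ) * (a j : ℝ) := by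
      intro j _
      rw [show (den x : ℝ) * ((c j : ℝ) * x j) = (c j : ℝ) * ((den x : ℝ) * x j) by ring, ha j]
    have h2 : (∑ j, (c j : ℝ) * (a j : ℝ)) + (den x : ℝ) * (m : ℝ) = 1 := by
      exact_mod_cast hcm
    have hR : (den x : ℝ) * ((∑ j, (c j : ℝ) * x j) + (m : ℝ) * 1) = 1 := by
      rw [mul_add, Finset.mul_sum, Finset.sum_congr rfl hmul]
      linear_combination h2
    have hkey : ((den x : ℝ))⁻¹ = (∑ j, (c j : ℝ) * x j) + (m : ℝ) * 1 := by
      apply mul_left_cancel₀ hdne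
      rw [mul_inv_cancel₀ hdne, hR]
    rw [hkey]
    apply AddSubgroup.add_mem
    · apply AddSubgroup.sum_mem
      intro j _
      rw [show (c j : ℝ) * x j = (c j : ℤ) • x j from (zsmul_eq_mul _ _).symm]
      exact AddSubgroup.zsmul_mem _ (AddSubgroup.subset_closure
        (Set.mem_insert_of_mem _ (Set.mem_range_self j))) _
    · rw [show (m : ℝ) * 1 = (m : ℤ) • (1 : ℝ) by simp]
      exact AddSubgroup.zsmul_mem _ (AddSubgroup.subset_closure (Set.mem_insert _ _)) _

lemma sameOrbit_of_Gx_eq (hn : 2 ≤ n) {x y : Fin n → ℝ} (hx : IsRationalPoint x)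
    (h : Gx y = Gx x) : SameOrbit n x y := by
  have hzx := Gx_eq_zmultiples hn hx
  obtain ⟨hdx, -⟩ := den_mem hx
  have hyi : ∀ i, ∃ k : ℤ, k • ((den x : ℝ))⁻¹ = y i := by
    intro i
    rw [← AddSubgroup.mem_zmultiples_iff, ← hzx, ← h]
    exact AddSubgroup.subset_closure (Set.mem_insert_of_mem _ (Set.mem_range_self i))
  choose k hk using hyi
  have hdxne : ((den x : ℕ) : ℝ) ≠ 0 := by positivity
  have hyrat : IsRationalPoint y := by
    intro i
    refine ⟨(k i : ℚ) / (den x : ℚ), ?_⟩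
    rw [← hk i, zsmul_eq_mul]
    push_cast
    ring
  have hint : ∀ i, ∃ m : ℤ, ((den x : ℕ) : ℝ) * y i = (m : ℝ) := by
    intro i
    refine ⟨k i, ?_⟩
    rw [← hk i, zsmul_eq_mul]
    field_simp
  obtain ⟨hdy, -⟩ := den_mem hyrat
  have hzy := Gx_eq_zmultiples hn hyrat
  have heq : AddSubgroup.zmultiples ((den y : ℝ))⁻¹ =
      AddSubgroup.zmultiples ((den x : ℝ))⁻¹ := by rw [← hzy, h, hzx]
  have h1 : ((den y : ℝ))⁻¹ ∈ AddSubgroup.zmultiples ((den x : ℝ))⁻¹ := by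
    rw [← heq]; exact AddSubgroup.mem_zmultiples _
  have h2 : ((den x : ℝ))⁻¹ ∈ AddSubgroup.zmultiples ((den y : ℝ))⁻¹ := by
    rw [heq]; exact AddSubgroup.mem_zmultiples _
  obtain ⟨k1, hk1⟩ := AddSubgroup.mem_zmultiples_iff.1 h1
  obtain ⟨k2, hk2⟩ := AddSubgroup.mem_zmultiples_iff.1 h2
  rw [zsmul_eq_mul] at hk1 hk2
  have hdyne : ((den y : ℕ) : ℝ) ≠ 0 := by positivity
  have hmulR : ((k1 : ℝ)) * ((k2 : ℝ) * ((den y : ℝ))⁻¹) = ((den y : ℝ))⁻¹ := by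
    rw [hk2, hk1]
  have hmul : ((k1 * k2 : ℤ) : ℝ) = 1 := by
    have h3 : ((k1 * k2 : ℤ) : ℝ) * ((den y : ℝ))⁻¹ = 1 * ((den y : ℝ))⁻¹ := by
      push_cast
      linear_combination hmulR
    exact mul_right_cancel₀ (inv_ne_zero hdyne) h3
  have hone : k1 * k2 = 1 := by exact_mod_cast hmul
  have hun := Int.isUnit_iff.1 (IsUnit.of_mul_eq_one _ hone)
  have hdeq : den x = den y := by
    rcases hun with h1' | h1'
    · rw [h1'] at hk1
      rw [Int.cast_one, one_mul] at hk1
      have := inv_inj.1 hk1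
      exact_mod_cast this
    · exfalso
      rw [h1'] at hk1
      have hp1 : (0 : ℝ) < ((den x : ℕ) : ℝ)⁻¹ := by positivity
      have hp2 : (0 : ℝ) < ((den y : ℕ) : ℝ)⁻¹ := by positivity
      rw [Int.cast_neg, Int.cast_one] at hk1
      nlinarith
  exact den_eq_sameOrbit hn x y hx hyrat hdeq

end Aux

/-- For every `n ≥ 2`, rational points of `ℝⁿ` with the same
denominator lie in the same `𝒢ₙ`-orbit; consequently, for every rational `x ∈ ℝⁿ`,
`orb(x) = {x' : G_{x'} = G_x}`. -/
theorem rational_orbit_classification (n : ℕ) (hn : 2 ≤ n) :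
    (∀ x x' : Fin n → ℝ, IsRationalPoint x → IsRationalPoint x' →
      den x = den x' → SameOrbit n x x') ∧
    (∀ x : Fin n → ℝ, IsRationalPoint x →
      {y | SameOrbit n x y} = {x' | Gx x' = Gx x}) := by
  refine ⟨fun x x' hx hx' hd => den_eq_sameOrbit hn x x' hx hx' hd, fun x hx => ?_⟩
  ext y
  simp only [Set.mem_setOf_eq]
  exact ⟨fun h => Gx_eq_of_sameOrbit h, fun h => sameOrbit_of_Gx_eq hn hx h⟩
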